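/- For every positive integer Δ there exists a positive integer q such that every connected graph with maximum degree at most Δ is q-quasi-isometric to some graph with maximum degree at most 3. -/

import Mathlib

open SimpleGraph
/-- `φ` is a `q`-quasi-isometry from the graph `G` to the graph `G'`. -/
def SimpleGraph.IsQuasiIsometry {V V' : Type*} (q : ℕ) (G : SimpleGraph V) (G' : SimpleGraph V')
    (φ : V → V') : Prop :=
  (∀ x y : V, (q : ℝ)⁻¹ * (G.dist x y : ℝ) - q ≤ (G'.dist (φ x) (φ y) : ℝ) ∧
     (G'.dist (φ x) (φ y) : ℝ) ≤ q * (G.dist x y : ℝ) + q) ∧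
  ∀ v' : V', ∃ v : V, (G'.dist v' (φ v) : ℝ) ≤ q

section Aux
variable {V : Type*} {Δ : ℕ} (G : SimpleGraph V) (F : V → V → Fin Δ)

/-- The degree ≤ 3 graph: each vertex of `G` is blown up into a path of `Δ` ports. -/
def QGraph : SimpleGraph (V × Fin Δ) where
  Adj a b := (a.1 = b.1 ∧ (a.2.val + 1 = b.2.val ∨ b.2.val + 1 = a.2.val)) ∨
    (G.Adj a.1 b.1 ∧ F a.1 b.1 = a.2 ∧ F b.1 a.1 = b.2)
  symm := ⟨fun a b h => by
    rcases h with ⟨h1, h2⟩ | ⟨h1, h2, h3⟩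
    · exact Or.inl ⟨h1.symm, h2.symm⟩
    · exact Or.inr ⟨h1.symm, h3, h2⟩⟩
  loopless := ⟨fun a h => by
    rcases h with ⟨_, h2 | h2⟩ | ⟨h1, _⟩
    · omega
    · omega
    · exact G.loopless.irrefl _ h1⟩

lemma qgraph_walk_up : ∀ (n : ℕ) (v : V) (i j : Fin Δ), i.val + n = j.val →
    ∃ w : (QGraph G F).Walk (v, i) (v, j), w.length = n := by
  intro n
  induction n with
  | zero =>
    intro v i j h
    have : i = j := Fin.ext (by omega)
    subst this
    exact ⟨.nil, rfl⟩
  | succ n ih =>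
    intro v i j h
    have hi1 : i.val + 1 < Δ := by have := j.isLt; omega
    have hadj : (QGraph G F).Adj (v, i) (v, ⟨i.val + 1, hi1⟩) := Or.inl ⟨rfl, Or.inl rfl⟩
    obtain ⟨w, hw⟩ := ih v ⟨i.val + 1, hi1⟩ j (by simp; omega)
    exact ⟨.cons hadj w, by simp [hw]⟩

lemma qgraph_walk_between (v : V) (i j : Fin Δ) :
    ∃ w : (QGraph G F).Walk (v, i) (v, j), w.length < Δ := by
  rcases le_or_gt i.val j.val with h | h
  · obtain ⟨w, hw⟩ := qgraph_walk_up G F (j.val - i.val) v i j (by omega)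
    exact ⟨w, by have := j.isLt; omega⟩
  · obtain ⟨w, hw⟩ := qgraph_walk_up G F (i.val - j.val) v j i (by omega)
    exact ⟨w.reverse, by simp [hw]; have := i.isLt; omega⟩

lemma qgraph_edge_lift (hΔ : 0 < Δ) {u v : V} (h : G.Adj u v) :
    ∃ w : (QGraph G F).Walk (u, ⟨0, hΔ⟩) (v, ⟨0, hΔ⟩), w.length ≤ 2 * Δ := by
  obtain ⟨w1, h1⟩ := qgraph_walk_between G F u ⟨0, hΔ⟩ (F u v)
  obtain ⟨w2, h2⟩ := qgraph_walk_between G F v (F v u) ⟨0, hΔ⟩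
  have hadj : (QGraph G F).Adj (u, F u v) (v, F v u) := Or.inr ⟨h, rfl, rfl⟩
  exact ⟨w1.append (.cons hadj w2), by simp; omega⟩

lemma qgraph_walk_lift (hΔ : 0 < Δ) {u v : V} (w : G.Walk u v) :
    ∃ w' : (QGraph G F).Walk (u, ⟨0, hΔ⟩) (v, ⟨0, hΔ⟩), w'.length ≤ 2 * Δ * w.length := by
  induction w with
  | nil => exact ⟨.nil, by simp⟩
  | cons h p ih =>
    obtain ⟨w1, h1⟩ := qgraph_edge_lift G F hΔ h
    obtain ⟨w2, h2⟩ := ih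
    refine ⟨w1.append w2, ?_⟩
    simp only [SimpleGraph.Walk.length_append, SimpleGraph.Walk.length_cons, Nat.mul_succ]
    omega

lemma qgraph_proj_dist (hG : G.Connected) {a b : V × Fin Δ} (w : (QGraph G F).Walk a b) :
    G.dist a.1 b.1 ≤ w.length := by
  induction w with
  | nil => rw [SimpleGraph.dist_self]; exact Nat.zero_le _
  | @cons a b c h p ih =>
    have h1 : G.dist a.1 b.1 ≤ 1 := by
      rcases h with ⟨he, _⟩ | ⟨ha, _⟩
      · rw [he, SimpleGraph.dist_self]; exact Nat.zero_le _
      · exact G.dist_le (SimpleGraph.Walk.cons ha SimpleGraph.Walk.nil)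
    calc G.dist a.1 c.1 ≤ G.dist a.1 b.1 + G.dist b.1 c.1 := hG.dist_triangle
      _ ≤ 1 + p.length := add_le_add h1 ih
      _ = (SimpleGraph.Walk.cons h p).length := by simp [add_comm]

lemma qgraph_connected (hΔ : 0 < Δ) (hG : G.Connected) : (QGraph G F).Connected := by
  have hne : Nonempty V := hG.nonempty
  have : Nonempty (V × Fin Δ) := ⟨(Classical.arbitrary V, ⟨0, hΔ⟩)⟩
  refine ⟨fun a b => ?_⟩
  obtain ⟨u, i⟩ := a
  obtain ⟨v, j⟩ := b
  obtain ⟨w1, -⟩ := qgraph_walk_between G F u i ⟨0, hΔ⟩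
  obtain ⟨w3, -⟩ := qgraph_walk_between G F v ⟨0, hΔ⟩ j
  obtain ⟨w0⟩ := hG.preconnected u v
  obtain ⟨w2, -⟩ := qgraph_walk_lift G F hΔ w0
  exact ⟨(w1.append w2).append w3⟩

lemma qgraph_maxdeg (hF : ∀ v, Set.InjOn (F v) (G.neighborSet v)) (v : V) (i : Fin Δ) :
    ((QGraph G F).neighborSet (v, i)).encard ≤ 3 := by
  classical
  set g : V × Fin Δ → Fin 3 :=
    fun b => if b.1 = v then (if b.2.val < i.val then 0 else 1) else 2 with hg
  have hinj : Set.InjOn g ((QGraph G F).neighborSet (v, i)) := by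
    rintro ⟨u1, j1⟩ hb1 ⟨u2, j2⟩ hb2 heq
    rw [SimpleGraph.mem_neighborSet] at hb1 hb2
    rcases hb1 with ⟨e1, p1⟩ | ⟨a1, f1, g1⟩ <;> rcases hb2 with ⟨e2, p2⟩ | ⟨a2, f2, g2⟩
    · -- both path edges
      simp only at e1 e2
      subst e1; subst e2
      have q1 : i.val + 1 = j1.val ∨ j1.val + 1 = i.val := p1
      have q2 : i.val + 1 = j2.val ∨ j2.val + 1 = i.val := p2
      simp only [hg, eq_self_iff_true, if_true] at heq
      split_ifs at heq with h1 h2 h2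
      · have hj : j1 = j2 := Fin.ext (by rcases q1 with q1 | q1 <;> rcases q2 with q2 | q2 <;> omega)
        rw [hj]
      · exact absurd heq (by decide)
      · exact absurd heq (by decide)
      · have hj : j1 = j2 := Fin.ext (by rcases q1 with q1 | q1 <;> rcases q2 with q2 | q2 <;> omega)
        rw [hj]
    · -- path / cross : impossible
      exfalso
      simp only at e1 a2
      subst e1
      have hu2 : ¬ (u2 = v) := fun hh => G.loopless.irrefl v (hh ▸ a2)
      simp only [hg, eq_self_iff_true, if_true, if_neg hu2] at heq
      split_ifs at heq <;> exact absurd heq (by decide)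
    · -- cross / path : impossible
      exfalso
      simp only at e2 a1
      subst e2
      have hu1 : ¬ (u1 = v) := fun hh => G.loopless.irrefl v (hh ▸ a1)
      simp only [hg, eq_self_iff_true, if_true, if_neg hu1] at heq
      split_ifs at heq <;> exact absurd heq (by decide)
    · -- both cross edges
      simp only at a1 a2 f1 f2 g1 g2
      have hu : u1 = u2 := hF v a1 a2 (f1.trans f2.symm)
      subst hu
      exact Prod.ext rfl ((g1.symm.trans g2))
  calc ((QGraph G F).neighborSet (v, i)).encard
      = (g '' ((QGraph G F).neighborSet (v, i))).encard := (hinj.encard_image).symm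
    _ ≤ (Set.univ : Set (Fin 3)).encard := Set.encard_le_encard (Set.subset_univ _)
    _ = 3 := by simp [Set.encard_univ]

end Aux

/-- **Reducing to maximum degree 3.** For every `Δ` there is a `q` such that every connected
graph of maximum degree at most `Δ` is `q`-quasi-isometric to a graph of maximum degree at
most `3`. -/
theorem quasi_isometric_to_max_degree_three (Δ : ℕ) (hΔ : 0 < Δ) :
    ∃ q : ℕ, 0 < q ∧
      ∀ (V : Type u) (G : SimpleGraph V), G.Connected →
        (∀ v : V, (G.neighborSet v).encard ≤ Δ) →
        ∃ (V' : Type u) (G' : SimpleGraph V') (φ : V → V'),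
          (∀ v' : V', (G'.neighborSet v').encard ≤ 3) ∧
          SimpleGraph.IsQuasiIsometry q G G' φ := by
  classical
  refine ⟨2 * Δ, by omega, ?_⟩
  intro V G hG hdeg
  -- choose, for each vertex, an injective labelling of its neighbours by `Fin Δ`
  have hFex : ∀ v : V, ∃ f : V → Fin Δ, Set.InjOn f (G.neighborSet v) := by
    intro v
    have hfin : (G.neighborSet v).Finite := by
      rw [← Set.encard_lt_top_iff]
      exact lt_of_le_of_lt (hdeg v) (WithTop.coe_lt_top (α := ℕ) Δ)
    haveI := hfin.fintype
    have hcard : Fintype.card (G.neighborSet v) ≤ Δ := by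
      obtain ⟨-, hn⟩ := Set.encard_le_coe_iff_finite_ncard_le.mp (hdeg v)
      rwa [← Nat.card_coe_set_eq, Nat.card_eq_fintype_card] at hn
    obtain ⟨e⟩ := Function.Embedding.nonempty_of_card_le
      (α := ↥(G.neighborSet v)) (β := Fin Δ) (by rw [Fintype.card_fin]; exact hcard)
    refine ⟨fun u => if h : u ∈ G.neighborSet v then e ⟨u, h⟩ else ⟨0, hΔ⟩, ?_⟩
    intro x hx y hy hxy
    dsimp only at hxy
    rw [dif_pos hx, dif_pos hy] at hxy
    exact Subtype.ext_iff.mp (e.injective hxy)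
  choose F hF using hFex
  set φ : V → V × Fin Δ := fun v => (v, ⟨0, hΔ⟩) with hφ
  refine ⟨V × Fin Δ, QGraph G F, φ, fun b => qgraph_maxdeg G F hF b.1 b.2, ?_, ?_⟩
  · intro x y
    have hle : G.dist x y ≤ (QGraph G F).dist (φ x) (φ y) := by
      obtain ⟨w, hw⟩ :=
        ((qgraph_connected G F hΔ hG).preconnected (φ x) (φ y)).exists_walk_length_eq_dist
      exact hw ▸ qgraph_proj_dist G F hG w
    have hge : (QGraph G F).dist (φ x) (φ y) ≤ 2 * Δ * G.dist x y := by
      obtain ⟨w, hw⟩ := (hG.preconnected x y).exists_walk_length_eq_dist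
      obtain ⟨w', hw'⟩ := qgraph_walk_lift G F hΔ w
      rw [hw] at hw'
      exact le_trans ((QGraph G F).dist_le w') hw'
    have hle' : (G.dist x y : ℝ) ≤ ((QGraph G F).dist (φ x) (φ y) : ℝ) := by exact_mod_cast hle
    have hge' : ((QGraph G F).dist (φ x) (φ y) : ℝ) ≤ 2 * Δ * G.dist x y := by exact_mod_cast hge
    have hd : (0 : ℝ) ≤ (G.dist x y : ℝ) := Nat.cast_nonneg _
    have hq1 : (1 : ℝ) ≤ ((2 * Δ : ℕ) : ℝ) := by exact_mod_cast (by omega : 1 ≤ 2 * Δ)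
    constructor
    · have h2 : ((2 * Δ : ℕ) : ℝ)⁻¹ * (G.dist x y : ℝ) ≤ (G.dist x y : ℝ) :=
        mul_le_of_le_one_left hd (inv_le_one_of_one_le₀ hq1)
      have hq0 : (0 : ℝ) ≤ ((2 * Δ : ℕ) : ℝ) := by linarith
      linarith
    · push_cast
      push_cast at hge'
      linarith
  · rintro ⟨v, i⟩
    refine ⟨v, ?_⟩
    obtain ⟨w, hw⟩ := qgraph_walk_between G F v i ⟨0, hΔ⟩
    have h1 : (QGraph G F).dist (v, i) (φ v) ≤ w.length := (QGraph G F).dist_le w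
    have h2 : (QGraph G F).dist (v, i) (φ v) ≤ 2 * Δ := by omega
    exact_mod_cast h2
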